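/- Let T be a triangulated category and I an ideal of T. Then the following are equivalent: (a) I is a special precovering ideal in T; (b) I is a precovering ideal in T; (c) (I, I^⊥) is a complete ideal cotorsion pair in T. In particular, every precovering ideal in a triangulated category is special precovering. -/

import Mathlib

open CategoryTheory CategoryTheory.Limits

universe w v u

variable {C : Type u} [Category.{v} C] [Preadditive C]

/-- A class of morphisms in a category. -/
abbrev MorClass (C : Type u) [Category.{v} C] : Type _ :=
  ∀ ⦃X Y : C⦄, (X ⟶ Y) → Prop

/-- An ideal of a preadditive category: an additive subbifunctor of `Hom`,
i.e. for each pair of objects a subgroup of morphisms, closed under two-sided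
composition with arbitrary morphisms. -/
structure CatIdeal (C : Type u) [Category.{v} C] [Preadditive C] where
  carrier : MorClass C
  zero_mem : ∀ (X Y : C), carrier (0 : X ⟶ Y)
  add_mem : ∀ ⦃X Y : C⦄ ⦃f g : X ⟶ Y⦄, carrier f → carrier g → carrier (f + g)
  neg_mem : ∀ ⦃X Y : C⦄ ⦃f : X ⟶ Y⦄, carrier f → carrier (-f)
  comp_left_mem : ∀ ⦃W X Y : C⦄ (e : W ⟶ X) ⦃f : X ⟶ Y⦄, carrier f → carrier (e ≫ f)
  comp_right_mem : ∀ ⦃X Y Z : C⦄ ⦃f : X ⟶ Y⦄ (e : Y ⟶ Z), carrier f → carrier (f ≫ e)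

/-- An exact structure on a preadditive category: a distinguished class of
kernel-cokernel pairs ("conflations"). -/
structure ExactStructure (C : Type u) [Category.{v} C] [Preadditive C] where
  IsConflation : ∀ ⦃X Y Z : C⦄, (X ⟶ Y) → (Y ⟶ Z) → Prop
  comp_zero : ∀ ⦃X Y Z : C⦄ ⦃i : X ⟶ Y⦄ ⦃p : Y ⟶ Z⦄, IsConflation i p → i ≫ p = 0
  isKernel : ∀ ⦃X Y Z : C⦄ ⦃i : X ⟶ Y⦄ ⦃p : Y ⟶ Z⦄, IsConflation i p →
      ∀ ⦃W : C⦄ (g : W ⟶ Y), g ≫ p = 0 → ∃! h : W ⟶ X, h ≫ i = g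
  isCokernel : ∀ ⦃X Y Z : C⦄ ⦃i : X ⟶ Y⦄ ⦃p : Y ⟶ Z⦄, IsConflation i p →
      ∀ ⦃W : C⦄ (g : Y ⟶ W), i ≫ g = 0 → ∃! h : Z ⟶ W, p ≫ h = g

namespace ExactStructure

variable (E : ExactStructure C)

/-- A deflation (admissible epimorphism). -/
def Deflation {Y Z : C} (p : Y ⟶ Z) : Prop := ∃ (X : C) (i : X ⟶ Y), E.IsConflation i p

/-- An inflation (admissible monomorphism). -/
def Inflation {X Y : C} (i : X ⟶ Y) : Prop := ∃ (Z : C) (p : Y ⟶ Z), E.IsConflation i p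

/-- Projective object relative to the exact structure. -/
def Projective (P : C) : Prop :=
  ∀ ⦃Y Z : C⦄ (p : Y ⟶ Z), E.Deflation p → ∀ f : P ⟶ Z, ∃ g : P ⟶ Y, g ≫ p = f

/-- Injective object relative to the exact structure. -/
def Injective (Q : C) : Prop :=
  ∀ ⦃X Y : C⦄ (i : X ⟶ Y), E.Inflation i → ∀ f : X ⟶ Q, ∃ g : Y ⟶ Q, i ≫ g = f

/-- Ext-orthogonality of morphisms `a : A₀ ⟶ A₁` and `b : B₀ ⟶ B₁`:
`Ext(a,b) : Ext(A₁,B₀) → Ext(A₀,B₁)` is zero.  Elementwise: whenever a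
conflation `B₀ ↣ W ↠ A₀` maps to a conflation `B₀ ↣ Z ↠ A₁` by a morphism
of conflations of the form `(𝟙, g, a)` (so that the first is the pullback of
the second along `a`), the pushout along `b` splits, i.e. `b` extends over
the inflation `B₀ ↣ W`. -/
def ExtOrth {A₀ A₁ B₀ B₁ : C} (a : A₀ ⟶ A₁) (b : B₀ ⟶ B₁) : Prop :=
  ∀ ⦃Z W : C⦄ (i : B₀ ⟶ Z) (p : Z ⟶ A₁) (i' : B₀ ⟶ W) (p' : W ⟶ A₀) (g : W ⟶ Z),
    E.IsConflation i p → E.IsConflation i' p' → i' ≫ g = i → p' ≫ a = g ≫ p →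
    ∃ u : W ⟶ B₁, i' ≫ u = b

/-- The right Ext-orthogonal class of a class of morphisms. -/
def rightOrth (S : MorClass C) : MorClass C :=
  fun _ _ b => ∀ ⦃A₀ A₁ : C⦄ (a : A₀ ⟶ A₁), S a → E.ExtOrth a b

/-- The left Ext-orthogonal class of a class of morphisms. -/
def leftOrth (S : MorClass C) : MorClass C :=
  fun _ _ a => ∀ ⦃B₀ B₁ : C⦄ (b : B₀ ⟶ B₁), S b → E.ExtOrth a b

/-- `Ext¹(X,Y) = 0` for objects: every conflation `Y ↣ Z ↠ X` splits. -/
def ExtVanish (X Y : C) : Prop :=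
  ∀ ⦃Z : C⦄ (i : Y ⟶ Z) (p : Z ⟶ X), E.IsConflation i p → ∃ r : Z ⟶ Y, i ≫ r = 𝟙 Y

end ExactStructure

section Approximations

variable (S : MorClass C)

/-- `f : A ⟶ X` is an `S`-precover of `X`. -/
def IsPrecover {A X : C} (f : A ⟶ X) : Prop :=
  S f ∧ ∀ ⦃A' : C⦄ (f' : A' ⟶ X), S f' → ∃ h : A' ⟶ A, h ≫ f = f'

/-- `S` is a precovering class of morphisms. -/
def Precovering : Prop := ∀ X : C, ∃ (A : C) (f : A ⟶ X), IsPrecover S f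

/-- `f : X ⟶ B` is an `S`-preenvelope of `X`. -/
def IsPreenvelope {X B : C} (f : X ⟶ B) : Prop :=
  S f ∧ ∀ ⦃B' : C⦄ (f' : X ⟶ B'), S f' → ∃ h : B ⟶ B', f ≫ h = f'

/-- `S` is a preenveloping class of morphisms. -/
def Preenveloping : Prop := ∀ X : C, ∃ (B : C) (f : X ⟶ B), IsPreenvelope S f

end Approximations

namespace ExactStructure

variable (E : ExactStructure C) (S : MorClass C)

/-- A special `S`-precover in an exact category: a deflation `f : A ↠ X` in `S`
which is an `S`-precover fitting in a pushout diagram of conflations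
`K ↣ A' ↠ X` over `K' ↣ A ↠ X` with connecting morphism `g : K ⟶ K'`
right Ext-orthogonal to `S`. -/
def IsSpecialPrecover {A X : C} (f : A ⟶ X) : Prop :=
  IsPrecover S f ∧
  ∃ (K A' K' : C) (i₁ : K ⟶ A') (p₁ : A' ⟶ X) (i₂ : K' ⟶ A) (g : K ⟶ K') (h : A' ⟶ A),
    E.IsConflation i₁ p₁ ∧ E.IsConflation i₂ f ∧ i₁ ≫ h = g ≫ i₂ ∧ h ≫ f = p₁ ∧
    E.rightOrth S g

def SpecialPrecovering : Prop := ∀ X : C, ∃ (A : C) (f : A ⟶ X), E.IsSpecialPrecover S f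

/-- A special `S`-preenvelope in an exact category (dual notion). -/
def IsSpecialPreenvelope {X B : C} (j : X ⟶ B) : Prop :=
  IsPreenvelope S j ∧
  ∃ (V Z W : C) (q : B ⟶ V) (z : X ⟶ Z) (w : Z ⟶ W) (t : B ⟶ Z) (h : V ⟶ W),
    E.IsConflation j q ∧ E.IsConflation z w ∧ j ≫ t = z ∧ t ≫ w = q ≫ h ∧
    E.leftOrth S h

def SpecialPreenveloping : Prop := ∀ X : C, ∃ (B : C) (j : X ⟶ B), E.IsSpecialPreenvelope S j

/-- An ideal cotorsion pair (on the level of morphism classes). -/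
def IdealCotorsionPair (I J : MorClass C) : Prop :=
  I = E.leftOrth J ∧ J = E.rightOrth I

/-- A complete ideal cotorsion pair in an exact category. -/
def CompleteIdealCotorsionPair (I J : MorClass C) : Prop :=
  E.IdealCotorsionPair I J ∧ E.SpecialPrecovering I ∧ E.SpecialPreenveloping J

/-- A cotorsion pair of classes of objects. -/
def ObjCotorsionPair (𝒳 𝒴 : C → Prop) : Prop :=
  (∀ A : C, 𝒳 A ↔ ∀ B : C, 𝒴 B → E.ExtVanish A B) ∧
  (∀ B : C, 𝒴 B ↔ ∀ A : C, 𝒳 A → E.ExtVanish A B)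

/-- A complete cotorsion pair of classes of objects. -/
def CompleteObjCotorsionPair (𝒳 𝒴 : C → Prop) : Prop :=
  E.ObjCotorsionPair 𝒳 𝒴 ∧
  ∀ M : C,
    (∃ (Ym Xm : C) (i : Ym ⟶ Xm) (p : Xm ⟶ M), E.IsConflation i p ∧ 𝒳 Xm ∧ 𝒴 Ym) ∧
    (∃ (Ym Xm : C) (i : M ⟶ Ym) (p : Ym ⟶ Xm), E.IsConflation i p ∧ 𝒴 Ym ∧ 𝒳 Xm)

end ExactStructure

/-- A Frobenius category: an exact category with enough projectives and enough
injectives in which the projective and the injective objects coincide. -/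
structure FrobeniusCat (C : Type u) [Category.{v} C] [Preadditive C] extends ExactStructure C where
  enough_projectives : ∀ X : C, ∃ (P : C) (p : P ⟶ X),
    toExactStructure.Projective P ∧ toExactStructure.Deflation p
  enough_injectives : ∀ X : C, ∃ (Q : C) (i : X ⟶ Q),
    toExactStructure.Injective Q ∧ toExactStructure.Inflation i
  projective_iff_injective : ∀ X : C, toExactStructure.Projective X ↔ toExactStructure.Injective X

namespace FrobeniusCat

variable (F : FrobeniusCat C)

/-- `f` factors through a projective object. -/
def FactorsThruProj {X Y : C} (f : X ⟶ Y) : Prop :=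
  ∃ (P : C) (u : X ⟶ P) (v : P ⟶ Y), F.toExactStructure.Projective P ∧ u ≫ v = f

/-- Two parallel morphisms become equal in the stable category `A/ω`. -/
def StEq {X Y : C} (f g : X ⟶ Y) : Prop := F.FactorsThruProj (f - g)

/-- `e` becomes an isomorphism in the stable category. -/
def StIso {X Y : C} (e : X ⟶ Y) : Prop :=
  ∃ e' : Y ⟶ X, F.StEq (e ≫ e') (𝟙 X) ∧ F.StEq (e' ≫ e) (𝟙 Y)

/-- The image `S/ω` of a class of morphisms in the stable category, described by
representatives: `f` lies in `S/ω` iff it is stably equal to a member of `S`. -/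
def stImage (S : MorClass C) : MorClass C := fun X Y f => ∃ g : X ⟶ Y, S g ∧ F.StEq f g

/-- Left orthogonality `f ⊥ g` in the triangulated stable category `A/ω`:
for every model of the suspension functor on `g` (given by conflations into
projective-injective objects) and every `φ : A ⟶ B[1]`, the composite
`g[1] ∘ φ ∘ f` vanishes in `A/ω`. -/
def StOrth {X A B Y : C} (f : X ⟶ A) (g : B ⟶ Y) : Prop :=
  ∀ ⦃P B' Q Y' : C⦄ (αB : B ⟶ P) (βB : P ⟶ B') (αY : Y ⟶ Q) (βY : Q ⟶ Y')
    (g' : B' ⟶ Y') (ι : P ⟶ Q),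
    F.toExactStructure.Projective P → F.toExactStructure.Projective Q →
    F.toExactStructure.IsConflation αB βB → F.toExactStructure.IsConflation αY βY →
    αB ≫ ι = g ≫ αY → ι ≫ βY = βB ≫ g' →
    ∀ φ : A ⟶ B', F.FactorsThruProj (f ≫ φ ≫ g')

/-- The right orthogonal class in the stable category. -/
def stRightOrth (S : MorClass C) : MorClass C :=
  fun _ _ b => ∀ ⦃A₀ A₁ : C⦄ (a : A₀ ⟶ A₁), S a → F.StOrth a b

/-- The left orthogonal class in the stable category. -/
def stLeftOrth (S : MorClass C) : MorClass C :=
  fun _ _ a => ∀ ⦃B₀ B₁ : C⦄ (b : B₀ ⟶ B₁), S b → F.StOrth a b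

/-- An `S`-precover in the stable category `A/ω` (objects of `A/ω` are those
of `A`, morphisms are represented by morphisms of `A`). -/
def StIsPrecover (S : MorClass C) {A X : C} (f : A ⟶ X) : Prop :=
  S f ∧ ∀ ⦃A' : C⦄ (f' : A' ⟶ X), S f' → ∃ h : A' ⟶ A, F.StEq (h ≫ f) f'

def StPrecovering (S : MorClass C) : Prop := ∀ X : C, ∃ (A : C) (f : A ⟶ X), F.StIsPrecover S f

def StIsPreenvelope (S : MorClass C) {X B : C} (f : X ⟶ B) : Prop :=
  S f ∧ ∀ ⦃B' : C⦄ (f' : X ⟶ B'), S f' → ∃ h : B ⟶ B', F.StEq (f ≫ h) f'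

def StPreenveloping (S : MorClass C) : Prop := ∀ X : C, ∃ (B : C) (f : X ⟶ B), F.StIsPreenvelope S f

/-- A special `S`-precover in the triangulated stable category `A/ω`:
a homotopy pushout diagram of distinguished triangles over `i` whose connecting
morphism `j` lies in `S^⊥`.  Distinguished triangles in `A/ω` are, up to stable
isomorphism, induced by conflations of `A`; accordingly the diagram is encoded by
a morphism of conflations `(j, t, 𝟙)` in `A` together with a stable isomorphism
`e` identifying the second row with (the triangle of) `i`. -/
def StIsSpecialPrecover (S : MorClass C) {X A : C} (i : X ⟶ A) : Prop :=
  F.StIsPrecover S i ∧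
  ∃ (Y Z B X₀ : C) (y : Y ⟶ Z) (z : Z ⟶ A) (b : B ⟶ X₀) (x : X₀ ⟶ A)
    (j : Y ⟶ B) (t : Z ⟶ X₀) (e : X₀ ⟶ X),
    F.toExactStructure.IsConflation y z ∧ F.toExactStructure.IsConflation b x ∧
    y ≫ t = j ≫ b ∧ t ≫ x = z ∧ F.StIso e ∧ F.StEq x (e ≫ i) ∧
    F.stRightOrth S j

def StSpecialPrecovering (S : MorClass C) : Prop :=
  ∀ A : C, ∃ (X : C) (i : X ⟶ A), F.StIsSpecialPrecover S i

/-- A special `S`-preenvelope in the triangulated stable category `A/ω`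
(dual to `StIsSpecialPrecover`): a homotopy pullback diagram with connecting
morphism `h` in `^⊥S`. -/
def StIsSpecialPreenvelope (S : MorClass C) {X B : C} (j : X ⟶ B) : Prop :=
  F.StIsPreenvelope S j ∧
  ∃ (B₀ V Z W : C) (b : X ⟶ B₀) (q : B₀ ⟶ V) (z : X ⟶ Z) (w : Z ⟶ W)
    (t : B₀ ⟶ Z) (h : V ⟶ W) (e : B₀ ⟶ B),
    F.toExactStructure.IsConflation b q ∧ F.toExactStructure.IsConflation z w ∧
    b ≫ t = z ∧ t ≫ w = q ≫ h ∧ F.StIso e ∧ F.StEq (b ≫ e) j ∧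
    F.stLeftOrth S h

def StSpecialPreenveloping (S : MorClass C) : Prop :=
  ∀ X : C, ∃ (B : C) (j : X ⟶ B), F.StIsSpecialPreenvelope S j

/-- An ideal cotorsion pair in the stable category (classes given by
representatives in `A`). -/
def StIdealCotorsionPair (I J : MorClass C) : Prop :=
  I = F.stLeftOrth J ∧ J = F.stRightOrth I

/-- A complete ideal cotorsion pair in the stable category. -/
def StCompleteIdealCotorsionPair (I J : MorClass C) : Prop :=
  F.StIdealCotorsionPair I J ∧ F.StSpecialPrecovering I ∧ F.StSpecialPreenveloping J

end FrobeniusCat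

section Triangulated

open Pretriangulated

variable {T : Type u} [Category.{v} T] [Preadditive T] [HasZeroObject T]
  [HasShift T ℤ] [∀ n : ℤ, Functor.Additive (shiftFunctor T n)] [Pretriangulated T]

/-- Left orthogonality `f ⊥ g` in a triangulated category:
`g[1] ∘ φ ∘ f = 0` for all `φ : A ⟶ B[1]`. -/
def TOrth {X A B Y : T} (f : X ⟶ A) (g : B ⟶ Y) : Prop :=
  ∀ φ : A ⟶ B⟦(1 : ℤ)⟧, f ≫ φ ≫ g⟦(1 : ℤ)⟧' = 0

def tRightOrth (S : MorClass T) : MorClass T :=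
  fun _ _ b => ∀ ⦃A₀ A₁ : T⦄ (a : A₀ ⟶ A₁), S a → TOrth a b

def tLeftOrth (S : MorClass T) : MorClass T :=
  fun _ _ a => ∀ ⦃B₀ B₁ : T⦄ (b : B₀ ⟶ B₁), S b → TOrth a b

/-- A special `S`-precover in a triangulated category: an `S`-precover `i`
fitting in a homotopy pushout diagram of distinguished triangles
`Y → Z → A → Y[1]` over `B → X → A → B[1]` with connecting morphism
`j : Y ⟶ B` in `S^⊥`. -/
def TIsSpecialPrecover (S : MorClass T) {X A : T} (i : X ⟶ A) : Prop :=
  IsPrecover S i ∧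
  ∃ (Y Z B : T) (u : Y ⟶ Z) (v : Z ⟶ A) (w : A ⟶ Y⟦(1 : ℤ)⟧)
    (u' : B ⟶ X) (w' : A ⟶ B⟦(1 : ℤ)⟧) (j : Y ⟶ B) (t : Z ⟶ X),
    (Triangle.mk u v w ∈ distTriang T) ∧ (Triangle.mk u' i w' ∈ distTriang T) ∧
    u ≫ t = j ≫ u' ∧ t ≫ i = v ∧ w ≫ j⟦(1 : ℤ)⟧' = w' ∧ tRightOrth S j

def TSpecialPrecovering (S : MorClass T) : Prop :=
  ∀ A : T, ∃ (X : T) (i : X ⟶ A), TIsSpecialPrecover S i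

/-- A special `S`-preenvelope in a triangulated category (dual notion). -/
def TIsSpecialPreenvelope (S : MorClass T) {X B : T} (j : X ⟶ B) : Prop :=
  IsPreenvelope S j ∧
  ∃ (V Z W : T) (q : B ⟶ V) (δ : V ⟶ X⟦(1 : ℤ)⟧) (z : X ⟶ Z) (w : Z ⟶ W)
    (δ' : W ⟶ X⟦(1 : ℤ)⟧) (t : B ⟶ Z) (h : V ⟶ W),
    (Triangle.mk j q δ ∈ distTriang T) ∧ (Triangle.mk z w δ' ∈ distTriang T) ∧
    j ≫ t = z ∧ q ≫ h = t ≫ w ∧ h ≫ δ' = δ ∧ tLeftOrth S h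

def TSpecialPreenveloping (S : MorClass T) : Prop :=
  ∀ X : T, ∃ (B : T) (j : X ⟶ B), TIsSpecialPreenvelope S j


section Stmt13Aux

open ZeroObject
set_option linter.unusedSectionVars false

namespace Stmt13Aux

variable {T : Type u} [Category.{v} T] [Preadditive T] [HasZeroObject T]
  [HasShift T ℤ] [∀ n : ℤ, Functor.Additive (shiftFunctor T n)] [Pretriangulated T]

lemma aux_tri (A : T) :
    Triangle.mk (0 : A⟦(-1:ℤ)⟧ ⟶ 0) (0 : (0:T) ⟶ A)
      ((shiftFunctorCompIsoId T (-1:ℤ) (1:ℤ) (neg_add_cancel 1)).inv.app A) ∈ distTriang T := by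
  refine isomorphic_distinguished _ (contractible_distinguished₂ (A⟦(-1:ℤ)⟧)) _ ?_
  exact Triangle.isoMk _ _ (Iso.refl _) (Iso.refl _)
    ((shiftFunctorCompIsoId T (-1:ℤ) (1:ℤ) (neg_add_cancel 1)).symm.app A) ((Category.comp_id _).trans (Category.id_comp _).symm)
      (zero_comp.trans comp_zero.symm) (by
        change (shiftFunctorCompIsoId T (-1:ℤ) (1:ℤ) (neg_add_cancel 1)).inv.app A ≫
          (shiftFunctor T (1:ℤ)).map (𝟙 (A⟦(-1:ℤ)⟧)) =
          (shiftFunctorCompIsoId T (-1:ℤ) (1:ℤ) (neg_add_cancel 1)).inv.app A ≫ 𝟙 _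
        simp)

noncomputable def jmor {X A B : T} (_i : X ⟶ A) (_u' : B ⟶ X) (w' : A ⟶ B⟦(1:ℤ)⟧) :
    A⟦(-1:ℤ)⟧ ⟶ B :=
  (shiftFunctor T (1:ℤ)).preimage (((shiftFunctorCompIsoId T (-1:ℤ) (1:ℤ) (neg_add_cancel 1)).hom.app A) ≫ w')

lemma jmor_shift {X A B : T} (i : X ⟶ A) (u' : B ⟶ X) (w' : A ⟶ B⟦(1:ℤ)⟧) :
    (jmor i u' w')⟦(1:ℤ)⟧' = ((shiftFunctorCompIsoId T (-1:ℤ) (1:ℤ) (neg_add_cancel 1)).hom.app A) ≫ w' :=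
  Functor.map_preimage _ _

lemma jmor_orth (I : CatIdeal T) {X A B : T} (i : X ⟶ A) (hi : IsPrecover I.carrier i)
    (u' : B ⟶ X) (w' : A ⟶ B⟦(1:ℤ)⟧) (hT : Triangle.mk u' i w' ∈ distTriang T) :
    tRightOrth I.carrier (jmor i u' w') := by
  intro A₀ A₁ a ha φ
  rw [jmor_shift]
  have h1 : I.carrier (a ≫ (φ ≫ (shiftFunctorCompIsoId T (-1:ℤ) (1:ℤ) (neg_add_cancel 1)).hom.app A)) :=
    I.comp_right_mem _ ha
  obtain ⟨h, hh⟩ := hi.2 _ h1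
  have h2 : i ≫ w' = 0 := comp_distTriang_mor_zero₂₃ _ hT
  calc a ≫ φ ≫ ((shiftFunctorCompIsoId T (-1:ℤ) (1:ℤ) (neg_add_cancel 1)).hom.app A) ≫ w'
      = (a ≫ (φ ≫ (shiftFunctorCompIsoId T (-1:ℤ) (1:ℤ) (neg_add_cancel 1)).hom.app A)) ≫ w' := by simp
    _ = (h ≫ i) ≫ w' := by rw [hh]
    _ = h ≫ (i ≫ w') := by rw [Category.assoc]
    _ = 0 := by rw [h2, comp_zero]

lemma special_of_precover (I : CatIdeal T) {X A : T} (i : X ⟶ A)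
    (hi : IsPrecover I.carrier i) : TIsSpecialPrecover I.carrier i := by
  obtain ⟨B, u', w', hT⟩ := distinguished_cocone_triangle₁ i
  refine ⟨hi, A⟦(-1:ℤ)⟧, 0, B, 0, 0, (shiftFunctorCompIsoId T (-1:ℤ) (1:ℤ) (neg_add_cancel 1)).inv.app A,
    u', w', jmor i u' w', 0, aux_tri A, hT, ?_, by simp, ?_, jmor_orth I i hi u' w' hT⟩
  · rw [zero_comp]
    apply (shiftFunctor T (1:ℤ)).map_injective
    have h31 := comp_distTriang_mor_zero₃₁ _ hT
    change w' ≫ u'⟦(1:ℤ)⟧' = 0 at h31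
    rw [Functor.map_comp, jmor_shift, Functor.map_zero, Category.assoc, h31, comp_zero]
  · rw [jmor_shift, Iso.inv_hom_id_app_assoc]

lemma mem_of_leftOrth (I : CatIdeal T) (hpre : Precovering I.carrier) {A₀ A₁ : T}
    (a : A₀ ⟶ A₁) (ha : tLeftOrth (tRightOrth I.carrier) a) : I.carrier a := by
  obtain ⟨X, i, hi⟩ := hpre A₁
  obtain ⟨B, u', w', hT⟩ := distinguished_cocone_triangle₁ i
  have h0 : a ≫ w' = 0 := by
    have := ha _ (jmor_orth I i hi u' w' hT) ((shiftFunctorCompIsoId T (-1:ℤ) (1:ℤ) (neg_add_cancel 1)).inv.app A₁)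
    rw [jmor_shift, Iso.inv_hom_id_app_assoc] at this
    exact this
  obtain ⟨g, hg⟩ := Triangle.coyoneda_exact₃ _ hT a h0
  rw [hg]
  exact I.comp_left_mem _ hi.1

lemma subset_leftOrth (I : CatIdeal T) {A₀ A₁ : T} {a : A₀ ⟶ A₁}
    (ha : I.carrier a) : tLeftOrth (tRightOrth I.carrier) a :=
  fun _ _ _ hb => hb _ ha

lemma nat_shift {P Q : T} (f : P ⟶ Q) :
    (f⟦(-1:ℤ)⟧')⟦(1:ℤ)⟧' =
      (shiftFunctorCompIsoId T (-1:ℤ) (1:ℤ) (neg_add_cancel 1)).hom.app P ≫ f ≫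
        (shiftFunctorCompIsoId T (-1:ℤ) (1:ℤ) (neg_add_cancel 1)).inv.app Q := by
  have h := (shiftFunctorCompIsoId T (-1:ℤ) (1:ℤ) (neg_add_cancel 1)).hom.naturality f
  have h2 : (shiftFunctor T (1:ℤ)).map ((shiftFunctor T (-1:ℤ)).map f) ≫
      (shiftFunctorCompIsoId T (-1:ℤ) (1:ℤ) (neg_add_cancel 1)).hom.app Q =
      (shiftFunctorCompIsoId T (-1:ℤ) (1:ℤ) (neg_add_cancel 1)).hom.app P ≫ f := h
  rw [← Category.assoc, ← h2]
  simp

lemma transported_invRot {X E Y₂ : T} (i : E ⟶ X⟦(1:ℤ)⟧) (u₂ : Y₂ ⟶ E)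
    (δ₂ : X⟦(1:ℤ)⟧ ⟶ Y₂⟦(1:ℤ)⟧) (hT : Triangle.mk u₂ i δ₂ ∈ distTriang T) :
    Triangle.mk
      ((shiftFunctorCompIsoId T (1:ℤ) (-1:ℤ) (add_neg_cancel 1)).inv.app X ≫
        (Triangle.mk u₂ i δ₂).invRotate.mor₁)
      u₂
      ((Triangle.mk u₂ i δ₂).invRotate.mor₃ ≫
        ((shiftFunctorCompIsoId T (1:ℤ) (-1:ℤ) (add_neg_cancel 1)).hom.app X)⟦(1:ℤ)⟧')
      ∈ distTriang T := by
  refine isomorphic_distinguished _ (inv_rot_of_distTriang _ hT) _ ?_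
  refine Triangle.isoMk _ _
    ((shiftFunctorCompIsoId T (1:ℤ) (-1:ℤ) (add_neg_cancel 1)).symm.app X)
    (Iso.refl _) (Iso.refl _) (Category.comp_id _) ((Category.comp_id _).trans (Category.id_comp _).symm) ?_
  dsimp
  change ((i ≫ (shiftFunctorCompIsoId T (-1:ℤ) (1:ℤ) (neg_add_cancel 1)).inv.app (X⟦(1:ℤ)⟧)) ≫
      ((shiftFunctorCompIsoId T (1:ℤ) (-1:ℤ) (add_neg_cancel 1)).hom.app X)⟦(1:ℤ)⟧') ≫
      ((shiftFunctorCompIsoId T (1:ℤ) (-1:ℤ) (add_neg_cancel 1)).inv.app X)⟦(1:ℤ)⟧' =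
    𝟙 E ≫ (i ≫ (shiftFunctorCompIsoId T (-1:ℤ) (1:ℤ) (neg_add_cancel 1)).inv.app (X⟦(1:ℤ)⟧))
  simp only [Category.assoc, ← Functor.map_comp, Iso.hom_inv_id_app]
  simp

lemma special_preenvelope (I : CatIdeal T) (hpre : Precovering I.carrier) (X : T) :
    ∃ (B : T) (j : X ⟶ B), TIsSpecialPreenvelope (tRightOrth I.carrier) j := by
  obtain ⟨E, i, hi⟩ := hpre (X⟦(1:ℤ)⟧)
  obtain ⟨Y₂, u₂, δ₂, hT⟩ := distinguished_cocone_triangle₁ i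
  set uI := shiftFunctorCompIsoId T (1:ℤ) (-1:ℤ) (add_neg_cancel 1) with huI
  set cI := shiftFunctorCompIsoId T (-1:ℤ) (1:ℤ) (neg_add_cancel 1) with hcI
  set j : X ⟶ Y₂ := uI.inv.app X ≫ (Triangle.mk u₂ i δ₂).invRotate.mor₁ with hj
  set δ : E ⟶ X⟦(1:ℤ)⟧ := (Triangle.mk u₂ i δ₂).invRotate.mor₃ ≫
      (uI.hom.app X)⟦(1:ℤ)⟧' with hδ
  have hT2 : Triangle.mk j u₂ δ ∈ distTriang T := transported_invRot i u₂ δ₂ hT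
  have hδi : δ = i ≫ (cI.inv.app (X⟦(1:ℤ)⟧) ≫ (uI.hom.app X)⟦(1:ℤ)⟧') := by
    rw [hδ]
    exact Category.assoc _ _ _
  have hδI : I.carrier δ := by rw [hδi]; exact I.comp_right_mem _ hi.1
  have hjshift : j⟦(1:ℤ)⟧' = -((uI.inv.app X)⟦(1:ℤ)⟧' ≫ cI.hom.app (X⟦(1:ℤ)⟧) ≫ δ₂ ≫
      cI.inv.app (Y₂⟦(1:ℤ)⟧) ≫ (uI.hom.app Y₂)⟦(1:ℤ)⟧') := by
    rw [hj]
    change (uI.inv.app X ≫ (-δ₂⟦(-1:ℤ)⟧' ≫ uI.hom.app Y₂))⟦(1:ℤ)⟧' = _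
    simp only [Functor.map_neg, Functor.map_comp, Preadditive.neg_comp, Preadditive.comp_neg]
    rw [nat_shift δ₂]
    rw [hcI]
    simp
  have hjorth : tRightOrth I.carrier j := by
    intro A₀ A₁ a ha φ
    rw [hjshift]
    have h1 : I.carrier (a ≫ (φ ≫ (uI.inv.app X)⟦(1:ℤ)⟧' ≫ cI.hom.app (X⟦(1:ℤ)⟧))) :=
      I.comp_right_mem _ ha
    obtain ⟨h, hh⟩ := hi.2 _ h1
    have h2 : i ≫ δ₂ = 0 := comp_distTriang_mor_zero₂₃ _ hT
    rw [Preadditive.comp_neg, Preadditive.comp_neg, neg_eq_zero]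
    calc a ≫ φ ≫ (uI.inv.app X)⟦(1:ℤ)⟧' ≫ cI.hom.app (X⟦(1:ℤ)⟧) ≫ δ₂ ≫
          cI.inv.app (Y₂⟦(1:ℤ)⟧) ≫ (uI.hom.app Y₂)⟦(1:ℤ)⟧'
        = (a ≫ (φ ≫ (uI.inv.app X)⟦(1:ℤ)⟧' ≫ cI.hom.app (X⟦(1:ℤ)⟧))) ≫ δ₂ ≫
            cI.inv.app (Y₂⟦(1:ℤ)⟧) ≫ (uI.hom.app Y₂)⟦(1:ℤ)⟧' := by simp
      _ = (h ≫ i) ≫ δ₂ ≫ cI.inv.app (Y₂⟦(1:ℤ)⟧) ≫ (uI.hom.app Y₂)⟦(1:ℤ)⟧' := by rw [hh]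
      _ = h ≫ (i ≫ δ₂) ≫ cI.inv.app (Y₂⟦(1:ℤ)⟧) ≫ (uI.hom.app Y₂)⟦(1:ℤ)⟧' := by simp
      _ = 0 := by rw [h2]; simp
  have henv : IsPreenvelope (tRightOrth I.carrier) j := by
    refine ⟨hjorth, ?_⟩
    intro B' j' hb
    have hT3 := inv_rot_of_distTriang _ hT2
    have hzero : (Triangle.mk j u₂ δ).invRotate.mor₁ ≫ j' = 0 := by
      change (-δ⟦(-1:ℤ)⟧' ≫ uI.hom.app X) ≫ j' = 0
      simp only [Preadditive.neg_comp, neg_eq_zero, Category.assoc]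
      apply (shiftFunctor T (1:ℤ)).map_injective
      simp only [Functor.map_comp, Functor.map_zero, nat_shift δ]
      rw [hδi]
      have key := hb i hi.1 (cI.inv.app (X⟦(1:ℤ)⟧) ≫ (uI.hom.app X)⟦(1:ℤ)⟧' ≫
        cI.inv.app (X⟦(1:ℤ)⟧) ≫ (uI.hom.app X)⟦(1:ℤ)⟧')
      simp only [Category.assoc, Functor.map_comp] at key ⊢
      rw [hcI] at key ⊢
      rw [key]
      simp
    obtain ⟨g', hg'⟩ := Triangle.yoneda_exact₂ _ hT3 j' hzero
    exact ⟨g', hg'.symm⟩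
  refine ⟨Y₂, j, henv, E, 0, X⟦(1:ℤ)⟧, u₂, δ, 0, 0, 𝟙 (X⟦(1:ℤ)⟧), 0, δ,
    hT2, contractible_distinguished₂ X, by simp, ?_, by simp,
    subset_leftOrth I hδI⟩
  have h12 : u₂ ≫ i = 0 := comp_distTriang_mor_zero₁₂ _ hT
  rw [hδi, ← Category.assoc, h12]
  simp

end Stmt13Aux

end Stmt13Aux

/-- for an ideal `I` of a triangulated category: (a) `I` special
precovering ↔ (b) `I` precovering ↔ (c) `(I, I^⊥)` a complete ideal cotorsion
pair; in particular every precovering ideal is special precovering. -/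
theorem stmt13 (I : CatIdeal T) :
    (TSpecialPrecovering I.carrier ↔ Precovering I.carrier) ∧
    (Precovering I.carrier ↔
      (I.carrier = tLeftOrth (tRightOrth I.carrier) ∧
       TSpecialPrecovering I.carrier ∧
       TSpecialPreenveloping (tRightOrth I.carrier))) := by
  have hab : TSpecialPrecovering I.carrier ↔ Precovering I.carrier := by
    constructor
    · intro h X
      obtain ⟨A, f, hf⟩ := h X
      exact ⟨A, f, hf.1⟩
    · intro h A
      obtain ⟨X, i, hi⟩ := h A
      exact ⟨X, i, Stmt13Aux.special_of_precover I i hi⟩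
  refine ⟨hab, ?_, ?_⟩
  · intro h
    refine ⟨?_, hab.2 h, fun X => Stmt13Aux.special_preenvelope I h X⟩
    funext A₀ A₁ a
    exact propext ⟨fun ha => Stmt13Aux.subset_leftOrth I ha,
      fun ha => Stmt13Aux.mem_of_leftOrth I h a ha⟩
  · intro h
    exact hab.1 h.2.1

end Triangulated
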